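/- Let β > 0, let a_1, …, a_K ∈ ℝ, and let Q_1, …, Q_K be i.i.d. real-valued random variables with the Gumbel(β) distribution. Then for every index j ∈ {1,…,K}, P[a_j + Q_j > max_{i ≠ j}(a_i + Q_i)] = exp(a_j/β) / ∑_{i=1}^{K} exp(a_i/β). -/

import Mathlib

open MeasureTheory ProbabilityTheory
open scoped ENNReal

section GumbelAux

open Filter Set Real intervalIntegral

variable {β S : ℝ}

/-- The antiderivative used in the Gumbel computations. -/
noncomputable def gumbelAux (β S x : ℝ) : ℝ := (1 / S) * Real.exp (-S * Real.exp (-x / β))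

/-- The Gumbel-type integrand. -/
noncomputable def gumbelG (β S x : ℝ) : ℝ :=
  (1 / β) * Real.exp (-x / β) * Real.exp (-S * Real.exp (-x / β))

lemma gumbelAux_hasDerivAt (hβ : 0 < β) (hS : 0 < S) (x : ℝ) :
    HasDerivAt (gumbelAux β S) (gumbelG β S x) x := by
  have h1 : HasDerivAt (fun x : ℝ => -x / β) (-1 / β) x := by
    simpa using ((hasDerivAt_id x).neg.div_const β)
  have h2 : HasDerivAt (fun x : ℝ => Real.exp (-x / β)) (Real.exp (-x / β) * (-1 / β)) x := h1.exp
  have h3 : HasDerivAt (fun x : ℝ => -S * Real.exp (-x / β))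
      (-S * (Real.exp (-x / β) * (-1 / β))) x := h2.const_mul _
  have h4 := (h3.exp).const_mul (1 / S)
  refine h4.congr_deriv ?_
  unfold gumbelG
  field_simp

lemma gumbelAux_tendsto_atBot (hβ : 0 < β) (hS : 0 < S) :
    Tendsto (gumbelAux β S) atBot (nhds 0) := by
  have h1 : Tendsto (fun x : ℝ => -x / β) atBot atTop := by
    apply Tendsto.atTop_div_const hβ
    exact tendsto_neg_atBot_atTop
  have h2 : Tendsto (fun x : ℝ => -S * Real.exp (-x / β)) atBot atBot := by
    apply Tendsto.const_mul_atTop_of_neg (by linarith) (Real.tendsto_exp_atTop.comp h1)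
  have := (Real.tendsto_exp_atBot.comp h2).const_mul (1 / S)
  have heq : gumbelAux β S = fun k => S⁻¹ * Real.exp (-(S * Real.exp (-k / β))) := by
    funext k; simp [gumbelAux, neg_mul, one_div]
  rw [heq]; simpa using this

lemma gumbelAux_tendsto_atTop (hβ : 0 < β) (hS : 0 < S) :
    Tendsto (gumbelAux β S) atTop (nhds (1 / S)) := by
  have h1 : Tendsto (fun x : ℝ => -x / β) atTop atBot := by
    apply Tendsto.atBot_div_const hβ tendsto_neg_atTop_atBot
  have h2 : Tendsto (fun x : ℝ => -S * Real.exp (-x / β)) atTop (nhds 0) := by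
    simpa using (Real.tendsto_exp_atBot.comp h1).const_mul (-S)
  have := (Real.continuous_exp.continuousAt.tendsto.comp h2).const_mul (1 / S)
  have heq : gumbelAux β S = fun k => S⁻¹ * Real.exp (-(S * Real.exp (-k / β))) := by
    funext k; simp [gumbelAux, neg_mul, one_div]
  rw [heq]; simpa using this

lemma integrableOn_exp_mul_Iic' {c : ℝ} (hc : 0 < c) :
    IntegrableOn (fun x => Real.exp (c * x)) (Iic (0:ℝ)) := by
  have hcont : Continuous fun x : ℝ => Real.exp (c * x) :=
    Real.continuous_exp.comp (continuous_const.mul continuous_id)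
  refine integrableOn_Iic_of_intervalIntegral_norm_bounded (1/c) 0
    (fun y => (hcont.intervalIntegrable _ _).1)
    tendsto_id (Eventually.of_forall fun y => ?_)
  have h : ∫ x in (y:ℝ)..(0:ℝ), Real.exp (c * x) = (1 - Real.exp (c * y)) / c := by
    have h2 := integral_comp_mul_left (a := y) (b := (0:ℝ))
      (fun x => Real.exp x) hc.ne'
    simp only [mul_zero, integral_exp, smul_eq_mul, Real.exp_zero] at h2
    rw [h2]
    field_simp
  simp only [id, Real.norm_of_nonneg (Real.exp_pos _).le]
  rw [h, div_le_div_iff_of_pos_right hc]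
  nlinarith [Real.exp_pos (c*y)]

lemma gumbelG_continuous (hβ : 0 < β) : Continuous (gumbelG β S) := by
  unfold gumbelG
  fun_prop

lemma gumbelG_nonneg (hβ : 0 < β) (x : ℝ) : 0 ≤ gumbelG β S x := by
  unfold gumbelG
  positivity

lemma gumbelG_integrable (hβ : 0 < β) (hS : 0 < S) : Integrable (gumbelG β S) := by
  rw [← integrableOn_univ, ← Iic_union_Ioi (a := (0:ℝ))]
  apply IntegrableOn.union
  · -- on Iic 0
    set C : ℝ := 2 / (S * β) * Real.exp (-S / 2) with hC
    have hint : IntegrableOn (fun x => C * Real.exp (S / (2 * β) * x)) (Iic (0:ℝ)) :=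
      (integrableOn_exp_mul_Iic' (by positivity)).const_mul C
    apply Integrable.mono hint ((gumbelG_continuous hβ).aestronglyMeasurable.restrict)
    rw [ae_restrict_iff' measurableSet_Iic]
    refine Eventually.of_forall fun x hx => ?_
    simp only [mem_Iic] at hx
    rw [Real.norm_of_nonneg (gumbelG_nonneg hβ x), Real.norm_of_nonneg (by positivity)]
    set u := Real.exp (-x / β) with hu
    have hu1 : S * u / 2 ≤ Real.exp (S * u / 2) := by
      linarith [Real.add_one_le_exp (S * u / 2)]
    have hub : u ≤ 2 / S * Real.exp (S * u / 2) := by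
      rw [div_mul_eq_mul_div, le_div_iff₀ hS]
      nlinarith
    have hu2 : 1 + (-x / β) ≤ u := by
      rw [hu]; linarith [Real.add_one_le_exp (-x/β)]
    have key : gumbelG β S x ≤ (1/β) * (2/S * Real.exp (S * u / 2)) * Real.exp (-S * u) := by
      unfold gumbelG
      rw [← hu]
      have := Real.exp_pos (-S * u)
      apply mul_le_mul_of_nonneg_right _ this.le
      apply mul_le_mul_of_nonneg_left hub (by positivity)
    have key2 : (1/β) * (2/S * Real.exp (S * u / 2)) * Real.exp (-S * u)
        = 2/(S*β) * Real.exp (-(S * u)/2) := by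
      have he : Real.exp (S * u / 2) * Real.exp (-S * u) = Real.exp (-(S * u)/2) := by
        rw [← Real.exp_add]; congr 1; ring
      calc (1/β) * (2/S * Real.exp (S * u / 2)) * Real.exp (-S * u)
          = 2/(S*β) * (Real.exp (S * u / 2) * Real.exp (-S * u)) := by ring
        _ = 2/(S*β) * Real.exp (-(S * u)/2) := by rw [he]
    have key3 : Real.exp (-(S*u)/2) ≤ Real.exp (-S/2) * Real.exp (S / (2*β) * x) := by
      rw [← Real.exp_add, Real.exp_le_exp]
      have hu2' : 1 + -(x/β) ≤ u := by rwa [neg_div] at hu2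
      have hv : S / (2*β) * x = S * (x/β) / 2 := by ring
      rw [hv]
      nlinarith [mul_le_mul_of_nonneg_left hu2' hS.le]
    calc gumbelG β S x ≤ 2/(S*β) * Real.exp (-(S*u)/2) := by rw [← key2]; exact key
      _ ≤ C * Real.exp (S / (2*β) * x) := by
          rw [hC, mul_assoc]
          exact mul_le_mul_of_nonneg_left key3 (by positivity)
  · -- on Ioi 0
    have hint : IntegrableOn (fun x => (1/β) * Real.exp (-(1/β) * x)) (Ioi (0:ℝ)) :=
      (exp_neg_integrableOn_Ioi 0 (by positivity)).const_mul (1/β)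
    apply Integrable.mono hint ((gumbelG_continuous hβ).aestronglyMeasurable.restrict)
    refine Eventually.of_forall fun x => ?_
    rw [Real.norm_of_nonneg (gumbelG_nonneg hβ x), Real.norm_of_nonneg (by positivity)]
    unfold gumbelG
    have h1 : Real.exp (-S * Real.exp (-x/β)) ≤ 1 := by
      rw [Real.exp_le_one_iff]
      have := Real.exp_pos (-x/β); nlinarith
    have h2 : (0:ℝ) ≤ (1/β) * Real.exp (-x/β) := by positivity
    calc (1/β) * Real.exp (-x/β) * Real.exp (-S * Real.exp (-x/β))
        ≤ (1/β) * Real.exp (-x/β) * 1 := by nlinarith [Real.exp_pos (-S * Real.exp (-x/β))]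
      _ = (1/β) * Real.exp (-(1/β) * x) := by rw [mul_one]; ring_nf

lemma gumbelG_integral (hβ : 0 < β) (hS : 0 < S) : ∫ x, gumbelG β S x = 1 / S := by
  have := integral_of_hasDerivAt_of_tendsto (f := gumbelAux β S) (f' := gumbelG β S)
    (gumbelAux_hasDerivAt hβ hS) (gumbelG_integrable hβ hS)
    (gumbelAux_tendsto_atBot hβ hS) (gumbelAux_tendsto_atTop hβ hS)
  simpa using this

lemma gumbelG_lintegral (hβ : 0 < β) (hS : 0 < S) :
    ∫⁻ x, ENNReal.ofReal (gumbelG β S x) = ENNReal.ofReal (1 / S) := by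
  rw [← gumbelG_integral hβ hS,
    MeasureTheory.ofReal_integral_eq_lintegral_ofReal (gumbelG_integrable hβ hS)
      (Eventually.of_forall (gumbelG_nonneg hβ))]

end GumbelAux

/-- The Gumbel distribution with scale `β`, i.e. the measure on `ℝ` with density
`x ↦ (1/β) * exp(-x/β - exp(-x/β))` with respect to Lebesgue measure. -/
noncomputable def gumbelMeasure (β : ℝ) : Measure ℝ :=
  MeasureTheory.volume.withDensity fun x =>
    ENNReal.ofReal ((1 / β) * Real.exp (-x / β - Real.exp (-x / β)))

section GumbelCDF

open Set Filter

lemma gumbel_density_eq (β x : ℝ) :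
    (1 / β) * Real.exp (-x / β - Real.exp (-x / β)) = gumbelG β 1 x := by
  unfold gumbelG
  rw [mul_assoc, ← Real.exp_add]
  congr 2
  ring

lemma gumbel_cdf {β : ℝ} (hβ : 0 < β) (t : ℝ) :
    gumbelMeasure β (Iio t) = ENNReal.ofReal (Real.exp (-Real.exp (-t / β))) := by
  rw [gumbelMeasure, withDensity_apply _ measurableSet_Iio]
  have h1 : ∀ x, ENNReal.ofReal ((1 / β) * Real.exp (-x / β - Real.exp (-x / β)))
      = ENNReal.ofReal (gumbelG β 1 x) := fun x => by rw [gumbel_density_eq]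
  simp_rw [h1]
  have hint : IntegrableOn (gumbelG β 1) (Iio t) :=
    (gumbelG_integrable hβ one_pos).integrableOn
  rw [← MeasureTheory.ofReal_integral_eq_lintegral_ofReal hint
    (Eventually.of_forall fun x => gumbelG_nonneg hβ x)]
  congr 1
  rw [← integral_Iic_eq_integral_Iio]
  have := MeasureTheory.integral_Iic_of_hasDerivAt_of_tendsto' (a := t)
    (fun x _ => gumbelAux_hasDerivAt hβ one_pos x)
    ((gumbelG_integrable hβ one_pos).integrableOn)
    (gumbelAux_tendsto_atBot hβ one_pos)
  rw [this]
  simp [gumbelAux]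

end GumbelCDF

/-- The Gumbel-max trick: report-noisy-max with i.i.d. `Gumbel(β)` noise selects index `j`
with the softmax probability `exp(a j / β) / ∑ i, exp(a i / β)`. -/
theorem reportNoisyMax_gumbel_eq_softmax {Ω : Type*} [MeasurableSpace Ω] (μ : Measure Ω)
    [IsProbabilityMeasure μ] {K : ℕ} (hK : 1 ≤ K) (β : ℝ) (hβ : 0 < β)
    (a : Fin K → ℝ) (Q : Fin K → Ω → ℝ) (hQ : ∀ i, Measurable (Q i))
    (hQdist : ∀ i, Measure.map (Q i) μ = gumbelMeasure β)
    (hIndep : iIndepFun Q μ) :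
    ∀ j : Fin K, μ {ω | ∀ i, i ≠ j → a i + Q i ω < a j + Q j ω} =
      ENNReal.ofReal (Real.exp (a j / β) / ∑ i, Real.exp (a i / β)) := by
  intro j
  obtain ⟨n, rfl⟩ : ∃ n, K = n + 1 := ⟨K - 1, (Nat.succ_pred_eq_of_pos hK).symm⟩
  set ν := gumbelMeasure β with hν
  haveI hprob : IsProbabilityMeasure ν := by
    rw [← hQdist 0]; exact Measure.isProbabilityMeasure_map (hQ 0).aemeasurable
  set F : Ω → (Fin (n+1) → ℝ) := fun ω i => Q i ω with hFdef
  have hF : Measurable F := measurable_pi_iff.2 hQ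
  have hjoint : μ.map F = Measure.pi (fun _ => ν) := by
    refine (Measure.pi_eq fun s hs => ?_).symm
    rw [Measure.map_apply hF (MeasurableSet.univ_pi hs)]
    have hpre : F ⁻¹' (Set.univ.pi s) = ⋂ i ∈ Finset.univ, Q i ⁻¹' (s i) := by
      ext ω; simp [hFdef, Set.mem_pi]
    rw [hpre, hIndep.measure_inter_preimage_eq_mul Finset.univ (fun i _ => hs i)]
    refine Finset.prod_congr rfl fun i _ => ?_
    rw [← Measure.map_apply (hQ i) (hs i), hQdist i]
  set T : Set (Fin (n+1) → ℝ) := {x | ∀ i, i ≠ j → a i + x i < a j + x j} with hTdef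
  have hTmeas : MeasurableSet T := by
    have : T = ⋂ i, ⋂ (_ : i ≠ j), {x : Fin (n+1) → ℝ | a i + x i < a j + x j} := by
      ext x; simp [hTdef]
    rw [this]
    exact MeasurableSet.iInter fun i => MeasurableSet.iInter fun _ =>
      measurableSet_lt (by fun_prop) (by fun_prop)
  have hEv : {ω | ∀ i, i ≠ j → a i + Q i ω < a j + Q j ω} = F ⁻¹' T := rfl
  rw [hEv, ← Measure.map_apply hF hTmeas, hjoint]
  -- split off coordinate j
  have hmp := MeasureTheory.measurePreserving_piFinSuccAbove (fun _ : Fin (n+1) => ν) j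
  set e := MeasurableEquiv.piFinSuccAbove (fun _ : Fin (n+1) => ℝ) j with hedef
  set U : Set (ℝ × (Fin n → ℝ)) := {p | ∀ k, a (j.succAbove k) + p.2 k < a j + p.1} with hUdef
  have hUmeas : MeasurableSet U := by
    have : U = ⋂ k, {p : ℝ × (Fin n → ℝ) | a (j.succAbove k) + p.2 k < a j + p.1} := by
      ext p; simp [hUdef]
    rw [this]
    exact MeasurableSet.iInter fun k => measurableSet_lt (by fun_prop) (by fun_prop)
  have hTU : T = e ⁻¹' U := by
    ext x
    simp only [hTdef, hUdef, Set.mem_preimage, Set.mem_setOf_eq, hedef,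
      MeasurableEquiv.piFinSuccAbove_apply]
    constructor
    · intro h k
      exact h _ (j.succAbove_ne k)
    · intro h i hi
      obtain ⟨k, rfl⟩ := Fin.exists_succAbove_eq hi
      exact h k
  rw [hTU, hmp.measure_preimage hUmeas.nullMeasurableSet]
  -- disintegrate the product
  rw [Measure.prod_apply hUmeas]
  have hslice : ∀ x : ℝ, (Prod.mk x ⁻¹' U)
      = Set.univ.pi (fun k => Set.Iio (a j + x - a (j.succAbove k))) := by
    intro x
    ext y
    simp only [hUdef, Set.mem_preimage, Set.mem_setOf_eq, Set.mem_pi, Set.mem_univ,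
      Set.mem_Iio, forall_true_left]
    constructor
    · intro h k; linarith [h k]
    · intro h k; linarith [h k]
  have hmeasslice : ∀ x : ℝ, (Measure.pi fun _ : Fin n => ν) (Prod.mk x ⁻¹' U)
      = ENNReal.ofReal (∏ k : Fin n,
          Real.exp (-Real.exp (-(a j + x - a (j.succAbove k)) / β))) := by
    intro x
    rw [hslice x, Measure.pi_pi]
    simp_rw [hν, gumbel_cdf hβ]
    rw [← ENNReal.ofReal_prod_of_nonneg (fun k _ => (Real.exp_pos _).le)]
  simp_rw [hmeasslice]
  -- compute the integral against ν
  set S : ℝ := 1 + ∑ k : Fin n, Real.exp ((a (j.succAbove k) - a j) / β) with hSdef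
  have hSpos : 0 < S := by
    have : 0 ≤ ∑ k : Fin n, Real.exp ((a (j.succAbove k) - a j) / β) :=
      Finset.sum_nonneg fun k _ => (Real.exp_pos _).le
    rw [hSdef]; linarith
  have hintegrand : ∀ x : ℝ,
      ENNReal.ofReal ((1 / β) * Real.exp (-x / β - Real.exp (-x / β))) *
        ENNReal.ofReal (∏ k : Fin n,
          Real.exp (-Real.exp (-(a j + x - a (j.succAbove k)) / β)))
      = ENNReal.ofReal (gumbelG β S x) := by
    intro x
    rw [← ENNReal.ofReal_mul (by positivity)]
    congr 1
    have hterm : ∀ k : Fin n, Real.exp (-(a j + x - a (j.succAbove k)) / β)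
        = Real.exp ((a (j.succAbove k) - a j) / β) * Real.exp (-x / β) := by
      intro k
      rw [← Real.exp_add]
      congr 1
      ring
    have hprod : (∏ k : Fin n, Real.exp (-Real.exp (-(a j + x - a (j.succAbove k)) / β)))
        = Real.exp (-(S - 1) * Real.exp (-x / β)) := by
      rw [← Real.exp_sum]
      congr 1
      simp_rw [hterm]
      rw [Finset.sum_neg_distrib, ← Finset.sum_mul, hSdef]
      ring
    rw [hprod]
    unfold gumbelG
    rw [mul_assoc, mul_assoc, ← Real.exp_add, ← Real.exp_add]
    congr 2
    ring
  have hlhs : ∫⁻ x, ENNReal.ofReal (∏ k : Fin n,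
        Real.exp (-Real.exp (-(a j + x - a (j.succAbove k)) / β))) ∂ν
      = ENNReal.ofReal (1 / S) := by
    rw [hν, gumbelMeasure, lintegral_withDensity_eq_lintegral_mul]
    · rw [← gumbelG_lintegral hβ hSpos]
      exact lintegral_congr fun x => by simpa using hintegrand x
    · fun_prop
    · fun_prop
  rw [hlhs]
  congr 1
  -- final algebra
  have hsum : (∑ i, Real.exp (a i / β))
      = Real.exp (a j / β) + ∑ k : Fin n, Real.exp (a (j.succAbove k) / β) :=
    Fin.sum_univ_succAbove _ j
  have hterm : ∀ k : Fin n, Real.exp ((a (j.succAbove k) - a j) / β)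
      = Real.exp (a (j.succAbove k) / β) / Real.exp (a j / β) := by
    intro k
    rw [← Real.exp_sub]
    congr 1
    ring
  have hA : 0 < Real.exp (a j / β) := Real.exp_pos _
  have hB : 0 ≤ ∑ k : Fin n, Real.exp (a (j.succAbove k) / β) :=
    Finset.sum_nonneg fun k _ => (Real.exp_pos _).le
  rw [hsum, hSdef]
  simp_rw [hterm]
  rw [← Finset.sum_div]
  field_simp
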